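/- For all ρ > 0, m ∈ ℝ^d, M ∈ S₀^d, one has (1/2)|m|²/ρ ≤ e_kin(ρ,m,M), with equality if and only if M = m⊗m/ρ − (1/d)(|m|²/ρ) I_d. -/

import Mathlib

open Matrix

noncomputable def lamMax {d : ℕ} (M : Matrix (Fin d) (Fin d) ℝ) : ℝ :=
  sSup {r : ℝ | ∃ v : Fin d → ℝ, v ⬝ᵥ v = 1 ∧ v ⬝ᵥ M.mulVec v = r}

noncomputable def eKin {d : ℕ} (ρ : ℝ) (m : Fin d → ℝ) (M : Matrix (Fin d) (Fin d) ℝ) : ℝ :=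
  ((d : ℝ) / 2) * lamMax (ρ⁻¹ • vecMulVec m m - M)

lemma quadSet_bddAbove {d : ℕ} (A : Matrix (Fin d) (Fin d) ℝ) :
    BddAbove {r : ℝ | ∃ v : Fin d → ℝ, v ⬝ᵥ v = 1 ∧ v ⬝ᵥ A.mulVec v = r} := by
  refine ⟨∑ i, ∑ j, |A i j|, ?_⟩
  rintro r ⟨v, hv, rfl⟩
  have habs : ∀ i, |v i| ≤ 1 := by
    intro i
    have h1 : v i * v i ≤ 1 := by
      rw [← hv]
      exact Finset.single_le_sum (fun j _ => mul_self_nonneg (v j)) (Finset.mem_univ i)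
    nlinarith [abs_nonneg (v i), abs_mul_abs_self (v i)]
  have hrw : v ⬝ᵥ A.mulVec v = ∑ i, ∑ j, v i * (A i j * v j) := by
    simp [dotProduct, Matrix.mulVec, Finset.mul_sum]
  rw [hrw]
  refine Finset.sum_le_sum fun i _ => Finset.sum_le_sum fun j _ => ?_
  calc v i * (A i j * v j) ≤ |v i * (A i j * v j)| := le_abs_self _
    _ = |v i| * |A i j| * |v j| := by rw [abs_mul, abs_mul]; ring
    _ ≤ 1 * |A i j| * 1 := by
        have h0 := abs_nonneg (A i j)
        have h4 := abs_nonneg (v j)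
        exact mul_le_mul (mul_le_mul (habs i) le_rfl h0 zero_le_one) (habs j) h4
          (by positivity)
    _ = |A i j| := by ring

lemma single_quad {d : ℕ} (A : Matrix (Fin d) (Fin d) ℝ) (i j : Fin d) :
    (Pi.single i 1 : Fin d → ℝ) ⬝ᵥ A.mulVec (Pi.single j 1) = A i j := by
  simp [Matrix.mulVec_single]

lemma diag_le_lamMax {d : ℕ} (A : Matrix (Fin d) (Fin d) ℝ) (i : Fin d) :
    A i i ≤ lamMax A :=
  le_csSup (quadSet_bddAbove A) ⟨Pi.single i 1, by simp, single_quad A i i⟩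

/-- (1/2)|m|²/ρ ≤ e_kin(ρ,m,M), with equality iff
M = m⊗m/ρ − (1/d)(|m|²/ρ)I_d. -/
theorem eKin_lower_bound {d : ℕ} (hd : 2 ≤ d) (ρ : ℝ) (hρ : 0 < ρ)
    (m : Fin d → ℝ) (M : Matrix (Fin d) (Fin d) ℝ)
    (hsymm : M.IsSymm) (htr : M.trace = 0) :
    (1 / 2) * (m ⬝ᵥ m) / ρ ≤ eKin ρ m M ∧
    ((1 / 2) * (m ⬝ᵥ m) / ρ = eKin ρ m M ↔
      M = ρ⁻¹ • vecMulVec m m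
        - ((1 / (d : ℝ)) * ((m ⬝ᵥ m) / ρ)) • (1 : Matrix (Fin d) (Fin d) ℝ)) := by
  have hdn : 0 < d := lt_of_lt_of_le (by norm_num) hd
  have hd0 : (0 : ℝ) < (d : ℝ) := by exact_mod_cast hdn
  set A : Matrix (Fin d) (Fin d) ℝ := ρ⁻¹ • vecMulVec m m - M with hA
  set t : ℝ := (m ⬝ᵥ m) / ρ / d with ht
  have hAsymm : ∀ i j, A j i = A i j := by
    intro i j
    have hM : M j i = M i j := hsymm.apply i j
    simp [hA, Matrix.sub_apply, Matrix.smul_apply, vecMulVec_apply, hM, mul_comm]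
  have htrA : ∑ i, A i i = (m ⬝ᵥ m) / ρ := by
    have h1 : ∑ i, A i i = A.trace := rfl
    rw [h1, hA, Matrix.trace_sub, Matrix.trace_smul, htr]
    simp [Matrix.trace, Matrix.diag, vecMulVec_apply, dotProduct, div_eq_inv_mul]
  have hsum : ∑ i, A i i = d * t := by
    rw [htrA, ht]; field_simp
  have _ : Nonempty (Fin d) := ⟨⟨0, hdn⟩⟩
  have hconst : (∑ _i : Fin d, t) = (d : ℝ) * t := by
    simp [Finset.sum_const, nsmul_eq_mul]
  have hkey : t ≤ lamMax A := by
    by_contra h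
    push_neg at h
    have hall : ∀ i, A i i < t := fun i => lt_of_le_of_lt (diag_le_lamMax A i) h
    have hlt : ∑ i, A i i < ∑ _i : Fin d, t :=
      Finset.sum_lt_sum_of_nonempty Finset.univ_nonempty (fun i _ => hall i)
    rw [hsum, hconst] at hlt
    exact lt_irrefl _ hlt
  have hEk : eKin ρ m M = ((d : ℝ) / 2) * lamMax A := rfl
  have hLHS : (1 / 2) * (m ⬝ᵥ m) / ρ = ((d : ℝ) / 2) * t := by
    rw [ht]; field_simp
  have hcanc : ((1 / 2) * (m ⬝ᵥ m) / ρ = eKin ρ m M) ↔ t = lamMax A := by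
    rw [hEk, hLHS]
    constructor
    · intro h; exact mul_left_cancel₀ (by positivity : ((d : ℝ) / 2) ≠ 0) h
    · intro h; rw [h]
  have hM' : M = ρ⁻¹ • vecMulVec m m - A := by rw [hA]; abel
  have hts : ((1 : ℝ) / (d : ℝ)) * ((m ⬝ᵥ m) / ρ) = t := by rw [ht]; ring
  have hMA : (M = ρ⁻¹ • vecMulVec m m
        - ((1 / (d : ℝ)) * ((m ⬝ᵥ m) / ρ)) • (1 : Matrix (Fin d) (Fin d) ℝ)) ↔
      A = t • 1 := by
    rw [hts]
    constructor
    · intro h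
      have h2 : ρ⁻¹ • vecMulVec m m - A = ρ⁻¹ • vecMulVec m m - t • 1 := hM' ▸ h
      exact sub_right_inj.mp h2
    · intro h; rw [hM', h]
  have hforward : t = lamMax A → A = t • 1 := by
    intro h
    have hub : ∀ v : Fin d → ℝ, v ⬝ᵥ v = 1 → v ⬝ᵥ A.mulVec v ≤ t := fun v hv =>
      (le_csSup (quadSet_bddAbove A) ⟨v, hv, rfl⟩).trans_eq h.symm
    have hdle : ∀ i, A i i ≤ t := by
      intro i
      have := hub (Pi.single i 1) (by simp)
      rwa [single_quad] at this
    have hdiag : ∀ i, A i i = t := by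
      by_contra h'
      push_neg at h'
      obtain ⟨i, hi⟩ := h'
      have hlt : ∑ j, A j j < ∑ _j : Fin d, t :=
        Finset.sum_lt_sum (fun j _ => hdle j)
          ⟨i, Finset.mem_univ i, lt_of_le_of_ne (hdle i) hi⟩
      rw [hsum, hconst] at hlt
      exact lt_irrefl _ hlt
    have hoff : ∀ i j, i ≠ j → A i j = 0 := by
      intro i j hij
      have hquad : ∀ s : ℝ,
          ((Pi.single i 1 : Fin d → ℝ) + s • (Pi.single j 1 : Fin d → ℝ)) ⬝ᵥ
            A.mulVec ((Pi.single i 1 : Fin d → ℝ) + s • (Pi.single j 1 : Fin d → ℝ))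
          = A i i + s * A i j + s * A j i + s * s * A j j := by
        intro s
        simp only [Matrix.mulVec_add, Matrix.mulVec_smul, dotProduct_add, add_dotProduct,
          dotProduct_smul, smul_dotProduct, smul_eq_mul, single_quad]
        ring
      have hnorm : ∀ s : ℝ,
          ((Pi.single i 1 : Fin d → ℝ) + s • (Pi.single j 1 : Fin d → ℝ)) ⬝ᵥ
            ((Pi.single i 1 : Fin d → ℝ) + s • (Pi.single j 1 : Fin d → ℝ)) = 1 + s * s := by
        intro s
        simp only [dotProduct_add, add_dotProduct, dotProduct_smul, smul_dotProduct,
          smul_eq_mul]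
        have h1 : (Pi.single i 1 : Fin d → ℝ) ⬝ᵥ Pi.single i 1 = 1 := by simp
        have h2 : (Pi.single j 1 : Fin d → ℝ) ⬝ᵥ Pi.single j 1 = 1 := by simp
        have h3 : (Pi.single i 1 : Fin d → ℝ) ⬝ᵥ Pi.single j 1 = 0 := by
          simp [single_dotProduct, Pi.single_apply, hij]
        have h4 : (Pi.single j 1 : Fin d → ℝ) ⬝ᵥ Pi.single i 1 = 0 := by
          simp [single_dotProduct, Pi.single_apply, Ne.symm hij]
        rw [h1, h2, h3, h4]; ring
      have hscale : ∀ s : ℝ, s * s = 1 → A i i + s * A i j + s * A j i + s * s * A j j ≤ 2 * t := by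
        intro s hs
        set c : ℝ := (Real.sqrt 2)⁻¹ with hc
        have hc2 : c * c = 1 / 2 := by
          rw [hc, ← mul_inv]
          rw [Real.mul_self_sqrt (by norm_num : (0:ℝ) ≤ 2)]; norm_num
        set v : Fin d → ℝ := (Pi.single i 1 : Fin d → ℝ) + s • (Pi.single j 1 : Fin d → ℝ) with hv
        have h1 : (c • v) ⬝ᵥ (c • v) = 1 := by
          rw [smul_dotProduct, dotProduct_smul, smul_eq_mul, smul_eq_mul, hnorm s, hs]
          rw [← mul_assoc, hc2]; norm_num
        have h2 : (c • v) ⬝ᵥ A.mulVec (c • v) = (1 / 2) * (A i i + s * A i j + s * A j i + s * s * A j j) := by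
          rw [Matrix.mulVec_smul, dotProduct_smul, smul_dotProduct, smul_eq_mul, smul_eq_mul,
            hquad s, ← mul_assoc, hc2]
        have h3 := hub (c • v) h1
        rw [h2] at h3
        linarith
      have hsymmij := hAsymm i j
      have hp := hscale 1 (by norm_num)
      have hn := hscale (-1) (by norm_num)
      rw [hdiag i, hdiag j] at hp hn
      have hji : A j i = A i j := hsymmij
      rw [hji] at hp hn
      linarith
    ext i j
    by_cases hij : i = j
    · subst hij; simp [Matrix.smul_apply, Matrix.one_apply, hdiag i]
    · simp [hoff i j hij, Matrix.smul_apply, Matrix.one_apply, hij]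
  have hback : A = t • 1 → t = lamMax A := by
    intro h
    have hval : ∀ v : Fin d → ℝ, v ⬝ᵥ v = 1 → v ⬝ᵥ A.mulVec v = t := by
      intro v hv
      rw [h, Matrix.smul_mulVec, Matrix.one_mulVec, dotProduct_smul, smul_eq_mul, hv,
        mul_one]
    have hset : {r : ℝ | ∃ v : Fin d → ℝ, v ⬝ᵥ v = 1 ∧ v ⬝ᵥ A.mulVec v = r} = {t} := by
      ext r
      simp only [Set.mem_setOf_eq, Set.mem_singleton_iff]
      constructor
      · rintro ⟨v, hv, rfl⟩; exact hval v hv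
      · rintro rfl
        exact ⟨Pi.single ⟨0, hdn⟩ 1, by simp, hval _ (by simp)⟩
    rw [lamMax, hset, csSup_singleton]
  refine ⟨?_, hcanc.trans (Iff.trans ⟨hforward, hback⟩ hMA.symm)⟩
  rw [hEk, hLHS]
  exact mul_le_mul_of_nonneg_left hkey (by positivity)
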